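/- Let ψ : ℝ → ℂ be a Schwartz function. Then the L^∞ norm of the Fourier transform of the tempered distribution ψ(ξ)·p.v.(1/ξ) is bounded by π times the L¹ norm of the Fourier transform of ψ; more precisely, |𝓕(ψ · p.v.(1/·))(t)| ≤ ‖𝓕ψ‖_{L¹(ℝ)} · π for all t ∈ ℝ, using that the Fourier transform of p.v.(1/ξ) is ξ ↦ -iπ·sign(ξ) (up to normalization) which has L^∞ norm π. -/

import Mathlib

open Complex Filter MeasureTheory

open intervalIntegral MeasureTheory Set

lemma sinc_intble {a b : ℝ} (ha : 0 < a) (hab : a ≤ b) :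
    IntervalIntegrable (fun x => Real.sin x / x) volume a b := by
  apply ContinuousOn.intervalIntegrable
  apply ContinuousOn.div Real.continuousOn_sin continuousOn_id
  intro x hx
  rw [Set.uIcc_of_le hab] at hx
  exact ne_of_gt (lt_of_lt_of_le ha hx.1)

lemma si_ibp {a b : ℝ} (ha : 0 < a) (hab : a ≤ b) :
    |∫ x in a..b, Real.sin x / x| ≤ 2 / a := by
  have hb : 0 < b := lt_of_lt_of_le ha hab
  have hne : ∀ x ∈ Set.uIcc a b, x ≠ 0 := by
    intro x hx
    rw [Set.uIcc_of_le hab] at hx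
    exact ne_of_gt (lt_of_lt_of_le ha hx.1)
  have hu : ∀ x ∈ Set.uIcc a b, HasDerivAt (fun y : ℝ => y⁻¹) (-(x^2)⁻¹) x := by
    intro x hx
    simpa using hasDerivAt_inv (hne x hx)
  have hv : ∀ x ∈ Set.uIcc a b, HasDerivAt (fun y : ℝ => -Real.cos y) (Real.sin x) x := by
    intro x hx
    have h := (Real.hasDerivAt_cos x).neg
    rw [neg_neg] at h
    exact h
  have hiu : IntervalIntegrable (fun x : ℝ => -(x^2)⁻¹) volume a b := by
    apply ContinuousOn.intervalIntegrable
    apply ContinuousOn.neg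
    apply ContinuousOn.inv₀ (by fun_prop)
    intro x hx; exact pow_ne_zero 2 (hne x hx)
  have hiv : IntervalIntegrable Real.sin volume a b := Real.continuous_sin.intervalIntegrable a b
  have key := intervalIntegral.integral_mul_deriv_eq_deriv_mul hu hv hiu hiv
  have h1 : ∀ x ∈ Set.uIcc a b, x⁻¹ * Real.sin x = Real.sin x / x := by
    intro x _; rw [div_eq_mul_inv, mul_comm]
  rw [intervalIntegral.integral_congr h1] at key
  rw [key]
  have hzz : ∀ x : ℝ, x ≠ 0 → (x:ℝ)^(-2:ℤ) = (x^2)⁻¹ := by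
    intro x hx
    rw [zpow_neg]
    norm_cast
  have hzpow : (∫ x in a..b, (x:ℝ)^(-2 : ℤ)) = 1/a - 1/b := by
    rw [integral_zpow]
    · norm_num
      ring
    · right
      refine ⟨by norm_num, ?_⟩
      rw [Set.uIcc_of_le hab]
      intro h; exact absurd h.1 (not_le.mpr ha)
  have hbd : |∫ x in a..b, -(x^2)⁻¹ * -Real.cos x| ≤ 1/a - 1/b := by
    have hle : ‖∫ x in a..b, -(x^2)⁻¹ * -Real.cos x‖ ≤ |∫ x in a..b, (x:ℝ)^(-2:ℤ)| := by
      apply intervalIntegral.norm_integral_le_abs_of_norm_le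
      · filter_upwards [MeasureTheory.ae_restrict_mem measurableSet_uIoc] with x hx
        have hx0 : 0 < x := by
          rcases Set.uIoc_subset_uIcc hx with h
          exact lt_of_lt_of_le ha ((Set.uIcc_of_le hab ▸ h).1)
        rw [Real.norm_eq_abs, hzz x hx0.ne', _root_.abs_mul, _root_.abs_neg, _root_.abs_neg, _root_.abs_inv,
          _root_.abs_of_pos (by positivity : (0:ℝ) < x^2)]
        calc (x^2)⁻¹ * |Real.cos x| ≤ (x^2)⁻¹ * 1 :=
            mul_le_mul_of_nonneg_left (Real.abs_cos_le_one x) (by positivity)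
          _ = (x^2)⁻¹ := mul_one _
      · apply ContinuousOn.intervalIntegrable
        apply ContinuousOn.zpow₀ continuousOn_id
        intro x hx; left; exact hne x hx
    rw [hzpow] at hle
    rw [_root_.abs_of_nonneg (by rw [sub_nonneg]; exact one_div_le_one_div_of_le ha hab)] at hle
    exact hle
  have habs : |b⁻¹ * -Real.cos b - a⁻¹ * -Real.cos a| ≤ 1/a + 1/b := by
    calc |b⁻¹ * -Real.cos b - a⁻¹ * -Real.cos a| ≤ |b⁻¹ * -Real.cos b| + |a⁻¹ * -Real.cos a| :=
      _root_.abs_sub _ _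
    _ ≤ 1/b + 1/a := by
        apply add_le_add
        · rw [_root_.abs_mul, _root_.abs_neg, _root_.abs_inv, _root_.abs_of_pos hb]
          calc b⁻¹ * |Real.cos b| ≤ b⁻¹ * 1 := mul_le_mul_of_nonneg_left (Real.abs_cos_le_one b) (by positivity)
          _ = 1/b := by rw [mul_one, one_div]
        · rw [_root_.abs_mul, _root_.abs_neg, _root_.abs_inv, _root_.abs_of_pos ha]
          calc a⁻¹ * |Real.cos a| ≤ a⁻¹ * 1 := mul_le_mul_of_nonneg_left (Real.abs_cos_le_one a) (by positivity)
          _ = 1/a := by rw [mul_one, one_div]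
    _ = 1/a + 1/b := by ring
  calc |b⁻¹ * -Real.cos b - a⁻¹ * -Real.cos a - ∫ x in a..b, -(x^2)⁻¹ * -Real.cos x|
      ≤ |b⁻¹ * -Real.cos b - a⁻¹ * -Real.cos a| + |∫ x in a..b, -(x^2)⁻¹ * -Real.cos x| := _root_.abs_sub _ _
    _ ≤ (1/a + 1/b) + (1/a - 1/b) := add_le_add habs hbd
    _ = 2/a := by ring

lemma si_small {a b : ℝ} (ha : 0 < a) (hab : a ≤ b) :
    |∫ x in a..b, Real.sin x / x| ≤ b - a := by
  have := intervalIntegral.norm_integral_le_of_norm_le_const (C := 1)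
    (f := fun x => Real.sin x / x) (a := a) (b := b) ?_
  · rwa [one_mul, _root_.abs_of_nonneg (sub_nonneg.mpr hab)] at this
  · intro x hx
    rw [Set.uIoc_of_le hab] at hx
    have hx0 : 0 < x := lt_of_le_of_lt ha.le hx.1
    rw [Real.norm_eq_abs, _root_.abs_div, _root_.abs_of_pos hx0, div_le_one hx0]
    calc |Real.sin x| ≤ |x| := Real.abs_sin_le_abs
      _ = x := _root_.abs_of_pos hx0

lemma si_bound {a b : ℝ} (ha : 0 < a) (hab : a ≤ b) :
    |∫ x in a..b, Real.sin x / x| ≤ 3 := by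
  rcases le_or_gt 1 a with h1 | h1
  · calc |∫ x in a..b, Real.sin x / x| ≤ 2 / a := si_ibp ha hab
      _ ≤ 2 / 1 := by apply div_le_div_of_nonneg_left (by norm_num) (by norm_num) h1
      _ ≤ 3 := by norm_num
  · rcases le_or_gt b 1 with h2 | h2
    · calc |∫ x in a..b, Real.sin x / x| ≤ b - a := si_small ha hab
        _ ≤ 3 := by linarith
    · have hsplit : (∫ x in a..(1:ℝ), Real.sin x / x) + (∫ x in (1:ℝ)..b, Real.sin x / x)
          = ∫ x in a..b, Real.sin x / x :=
        intervalIntegral.integral_add_adjacent_intervals (sinc_intble ha h1.le)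
          (sinc_intble one_pos h2.le)
      rw [← hsplit]
      calc |(∫ x in a..(1:ℝ), Real.sin x / x) + (∫ x in (1:ℝ)..b, Real.sin x / x)|
          ≤ |∫ x in a..(1:ℝ), Real.sin x / x| + |∫ x in (1:ℝ)..b, Real.sin x / x| := _root_.abs_add_le _ _
        _ ≤ (1 - a) + 2 / 1 := add_le_add (si_small ha h1.le) (si_ibp one_pos h2.le)
        _ ≤ 3 := by linarith

lemma si_freq {c ε R : ℝ} (hε : 0 < ε) (hεR : ε ≤ R) :
    |∫ x in ε..R, Real.sin (c*x) / x| ≤ 3 := by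
  rcases lt_trichotomy c 0 with hc | hc | hc
  · have hcong : ∀ x ∈ Set.uIcc ε R, Real.sin (c*x)/x = -((-c) * (Real.sin ((-c)*x) / ((-c)*x))) := by
      intro x hx
      rw [Set.uIcc_of_le hεR] at hx
      have hx0 : 0 < x := lt_of_lt_of_le hε hx.1
      have : Real.sin (c*x) = -Real.sin ((-c)*x) := by
        rw [neg_mul, Real.sin_neg, neg_neg]
      rw [this]
      field_simp [hc.ne, hx0.ne']
    rw [intervalIntegral.integral_congr hcong, intervalIntegral.integral_neg,
      intervalIntegral.integral_const_mul, _root_.abs_neg, _root_.abs_mul, _root_.abs_of_pos (by linarith : (0:ℝ) < -c)]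
    have := intervalIntegral.smul_integral_comp_mul_left (fun y => Real.sin y / y) (-c) (a := ε) (b := R)
    rw [smul_eq_mul] at this
    have h1 : -c * ε ≤ -c * R := by nlinarith
    have h2 : 0 < -c * ε := by nlinarith
    calc -c * |∫ x in ε..R, Real.sin (-c*x) / (-c*x)|
        = |(-c) * ∫ x in ε..R, Real.sin (-c*x) / (-c*x)| := by
          rw [_root_.abs_mul, _root_.abs_of_pos (by linarith : (0:ℝ) < -c)]
      _ = |∫ x in (-c*ε)..(-c*R), Real.sin x / x| := by rw [this]
      _ ≤ 3 := si_bound h2 h1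
  · simp [hc]
  · have hcong : ∀ x ∈ Set.uIcc ε R, Real.sin (c*x)/x = c * (Real.sin (c*x) / (c*x)) := by
      intro x hx
      rw [Set.uIcc_of_le hεR] at hx
      have hx0 : 0 < x := lt_of_lt_of_le hε hx.1
      field_simp
    rw [intervalIntegral.integral_congr hcong, intervalIntegral.integral_const_mul, _root_.abs_mul,
      _root_.abs_of_pos hc]
    have := intervalIntegral.smul_integral_comp_mul_left (fun y => Real.sin y / y) c (a := ε) (b := R)
    rw [smul_eq_mul] at this
    calc c * |∫ x in ε..R, Real.sin (c*x) / (c*x)|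
        = |c * ∫ x in ε..R, Real.sin (c*x) / (c*x)| := by rw [_root_.abs_mul, _root_.abs_of_pos hc]
      _ = |∫ x in (c*ε)..(c*R), Real.sin x / x| := by rw [this]
      _ ≤ 3 := si_bound (by positivity) (by nlinarith)

open Complex in
lemma kernel_bound {ε R a : ℝ} (hε : 0 < ε) :
    ‖∫ ξ in {ξ : ℝ | ε ≤ |ξ|} ∩ Set.Icc (-R) R, Complex.exp (Complex.I * a * ξ) / ξ‖ ≤ 6 := by
  rcases lt_or_ge R ε with hR | hR
  · have hempty : {ξ : ℝ | ε ≤ |ξ|} ∩ Set.Icc (-R) R = ∅ := by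
      rw [Set.eq_empty_iff_forall_notMem]
      rintro ξ ⟨h1, h2⟩
      rw [Set.mem_Icc] at h2
      have : |ξ| ≤ R := _root_.abs_le.mpr h2
      have : ε ≤ R := le_trans h1 this
      linarith
    rw [hempty]
    simp
  · have hεR : ε ≤ R := hR
    set f : ℝ → ℂ := fun ξ => Complex.exp (Complex.I * a * ξ) / ξ with hf
    have hset : {ξ : ℝ | ε ≤ |ξ|} ∩ Set.Icc (-R) R = Set.Icc (-R) (-ε) ∪ Set.Icc ε R := by
      ext ξ
      simp only [Set.mem_inter_iff, Set.mem_setOf_eq, Set.mem_Icc, Set.mem_union, le_abs]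
      constructor
      · rintro ⟨h1 | h1, h2, h3⟩
        · right; exact ⟨h1, h3⟩
        · left; exact ⟨h2, by linarith⟩
      · rintro (⟨h1, h2⟩ | ⟨h1, h2⟩)
        · exact ⟨Or.inr (by linarith), h1, by linarith⟩
        · exact ⟨Or.inl h1, by linarith, h2⟩
    have hcont : ∀ {u v : ℝ}, (0 : ℝ) ∉ Set.Icc u v → IntegrableOn f (Set.Icc u v) := by
      intro u v huv
      apply ContinuousOn.integrableOn_Icc
      apply ContinuousOn.div
      · fun_prop
      · fun_prop
      · intro x hx
        simp only [ne_eq, ofReal_eq_zero]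
        rintro rfl; exact huv hx
    have h0L : (0:ℝ) ∉ Set.Icc (-R) (-ε) := by
      rw [Set.mem_Icc]; push_neg; intro h; linarith
    have h0R : (0:ℝ) ∉ Set.Icc ε R := by
      rw [Set.mem_Icc]; push_neg; intro h; linarith
    have hdisj : Disjoint (Set.Icc (-R) (-ε)) (Set.Icc ε R) := by
      rw [Set.disjoint_left]
      rintro x hx1 hx2
      rw [Set.mem_Icc] at hx1 hx2
      linarith [hx1.2, hx2.1]
    rw [hset, MeasureTheory.setIntegral_union hdisj measurableSet_Icc (hcont h0L) (hcont h0R)]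
    have hIcc : ∀ {u v : ℝ}, u ≤ v → (∫ ξ in Set.Icc u v, f ξ) = ∫ ξ in u..v, f ξ := by
      intro u v huv
      rw [intervalIntegral.integral_of_le huv, MeasureTheory.integral_Icc_eq_integral_Ioc]
    rw [hIcc (by linarith : -R ≤ -ε), hIcc hεR]
    have hrefl : (∫ ξ in (-R)..(-ε), f ξ) = ∫ x in ε..R, f (-x) := by
      rw [intervalIntegral.integral_comp_neg f]
    rw [hrefl]
    have hib1 : IntervalIntegrable (fun x => f (-x)) MeasureTheory.volume ε R := by
      apply ContinuousOn.intervalIntegrable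
      apply ContinuousOn.div
      · fun_prop
      · fun_prop
      · intro x hx
        rw [Set.uIcc_of_le hεR] at hx
        simp only [ne_eq, ofReal_eq_zero, neg_eq_zero]
        rintro rfl; exact absurd hx.1 (not_le.mpr hε)
    have hib2 : IntervalIntegrable f MeasureTheory.volume ε R := by
      apply ContinuousOn.intervalIntegrable
      apply ContinuousOn.div
      · fun_prop
      · fun_prop
      · intro x hx
        rw [Set.uIcc_of_le hεR] at hx
        simp only [ne_eq, ofReal_eq_zero]
        rintro rfl; exact absurd hx.1 (not_le.mpr hε)
    rw [← intervalIntegral.integral_add hib1 hib2]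
    have hpt : ∀ x ∈ Set.uIcc ε R, f (-x) + f x = (2 * Complex.I) * ((Real.sin (a*x) / x : ℝ) : ℂ) := by
      intro x hx
      rw [Set.uIcc_of_le hεR] at hx
      have hx0 : (0:ℝ) < x := lt_of_lt_of_le hε hx.1
      have hxc : (x:ℂ) ≠ 0 := by exact_mod_cast hx0.ne'
      have e1 : Complex.exp (Complex.I * a * (x:ℝ)) = Complex.cos (a*x) + Complex.sin (a*x) * Complex.I := by
        rw [show Complex.I * (a:ℂ) * ((x:ℝ):ℂ) = (((a*x:ℝ)):ℂ) * Complex.I by push_cast; ring,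
          Complex.exp_mul_I]
        norm_cast
      have e2 : Complex.exp (Complex.I * a * ((-x:ℝ):ℂ)) = Complex.cos (a*x) - Complex.sin (a*x) * Complex.I := by
        rw [show Complex.I * (a:ℂ) * ((-x:ℝ):ℂ) = ((-(a*x):ℝ):ℂ) * Complex.I by push_cast; ring,
          Complex.exp_mul_I]
        push_cast
        rw [Complex.cos_neg, Complex.sin_neg]
        ring
      simp only [hf]
      rw [e1, e2]
      push_cast
      rw [div_neg, neg_add_eq_sub, div_sub_div_same, ← mul_div_assoc]
      congr 1
      ring
    rw [intervalIntegral.integral_congr hpt, intervalIntegral.integral_const_mul,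
      intervalIntegral.integral_ofReal]
    rw [norm_mul]
    have : ‖(2:ℂ) * Complex.I‖ = 2 := by simp
    rw [this]
    have hnorm : ‖(((∫ x in ε..R, Real.sin (a*x) / x : ℝ)) : ℂ)‖ = |∫ x in ε..R, Real.sin (a*x) / x| := by
      rw [Complex.norm_real, Real.norm_eq_abs]
    rw [hnorm]
    have := si_freq (c := a) hε hεR
    linarith


/-- Bound for the Fourier transform of `ψ(ξ)·p.v.(1/ξ)` for a Schwartz function `ψ`:
if the principal value `F = lim_{ε→0⁺} (2π)^{-1/2} ∫_{|ξ|≥ε} ψ(ξ) e^{-itξ}/ξ dξ`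
exists, then `|F| ≤ π ‖𝓕ψ‖_{L¹}`, where `𝓕ψ(t) = (2π)^{-1/2} ∫ ψ(ξ) e^{-itξ} dξ`
(this is the convolution bound using `|𝓕(p.v.(1/·))| = π·|sign| ≤ π`). -/
theorem stmt17 (ψ : SchwartzMap ℝ ℂ) (t : ℝ) (F : ℂ)
    (hF : Tendsto (fun ε : ℝ =>
        (((2 * Real.pi) ^ (-(1 : ℝ) / 2) : ℝ) : ℂ) *
          ∫ ξ in {ξ : ℝ | ε ≤ |ξ|}, ψ ξ * Complex.exp (-Complex.I * t * ξ) / ξ)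
      (nhdsWithin 0 (Set.Ioi 0)) (nhds F)) :
    ‖F‖ ≤ Real.pi * ∫ s : ℝ,
      ‖(((2 * Real.pi) ^ (-(1 : ℝ) / 2) : ℝ) : ℂ) *
        ∫ ξ : ℝ, ψ ξ * Complex.exp (-Complex.I * s * ξ)‖ := by

  have hπ : (0:ℝ) < 2 * Real.pi := by positivity
  set c : ℝ := (2 * Real.pi) ^ (-(1 : ℝ) / 2) with hcdef
  have hc : 0 < c := Real.rpow_pos_of_pos hπ _
  have hc2 : c * c = (2 * Real.pi)⁻¹ := by
    have he : (-(1:ℝ)/2 + -(1:ℝ)/2) = -1 := by norm_num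
    rw [hcdef, ← Real.rpow_add hπ, he, Real.rpow_neg_one]
  set φ : SchwartzMap ℝ ℂ := SchwartzMap.fourierTransformCLM ℂ ψ with hφdef
  have hφ : ⇑φ = FourierTransform.fourier (⇑ψ : ℝ → ℂ) := by
    rw [hφdef, SchwartzMap.fourierTransformCLM_apply, SchwartzMap.fourier_coe]
  set g : ℝ → ℂ := fun s => (c:ℂ) * φ ((2*Real.pi)⁻¹ * s) with hgdef
  -- identification of the statement's integrand with g
  have hgs : ∀ s : ℝ, (c:ℂ) * ∫ ξ : ℝ, ψ ξ * Complex.exp (-Complex.I * s * ξ) = g s := by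
    intro s
    rw [hgdef]
    congr 1
    rw [hφ, Real.fourier_real_eq_integral_exp_smul]
    apply MeasureTheory.integral_congr_ae
    apply Filter.Eventually.of_forall
    intro v
    simp only [smul_eq_mul]
    rw [mul_comm]
    congr 1
    have h1 : (-2*Real.pi*v*((2*Real.pi)⁻¹*s) : ℝ) = -(v*s) := by
      field_simp
    rw [h1]
    push_cast
    ring
  -- inversion formula
  have hinv : ∀ ξ : ℝ, (ψ ξ : ℂ) = ∫ w : ℝ, Complex.exp (((2*Real.pi*w*ξ : ℝ):ℂ) * Complex.I) * φ w := by
    intro ξ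
    have hint : Integrable (FourierTransform.fourier (⇑ψ : ℝ → ℂ) : ℝ → ℂ) := by rw [← hφ]; exact φ.integrable
    have h := MeasureTheory.Integrable.fourierInv_fourier_eq ψ.integrable hint
      (ψ.continuous.continuousAt (x := ξ))
    rw [Real.fourierInv_eq_fourier_neg,
      Real.fourier_real_eq_integral_exp_smul] at h
    rw [← h]
    apply MeasureTheory.integral_congr_ae
    apply Filter.Eventually.of_forall
    intro v
    simp only [smul_eq_mul, ← hφ]
    congr 2
    push_cast
    ring
  -- key convolution identity
  have hkey : ∀ ξ : ℝ, (ψ ξ : ℂ) * Complex.exp (-Complex.I * t * ξ)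
      = (c:ℂ) * ∫ s : ℝ, g s * Complex.exp (Complex.I * ((s - t : ℝ):ℂ) * ξ) := by
    intro ξ
    have hcv : ∫ w : ℝ, Complex.exp (((2*Real.pi*w*ξ : ℝ):ℂ) * Complex.I) * φ w
        = (2*Real.pi)⁻¹ • ∫ s : ℝ, Complex.exp (((2*Real.pi*((2*Real.pi)⁻¹*s)*ξ : ℝ):ℂ) * Complex.I) * φ ((2*Real.pi)⁻¹*s) := by
      rw [MeasureTheory.Measure.integral_comp_mul_left
        (fun w => Complex.exp (((2*Real.pi*w*ξ : ℝ):ℂ) * Complex.I) * φ w) ((2*Real.pi)⁻¹)]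
      rw [smul_smul]
      have h12 : (2*Real.pi)⁻¹ * |((2*Real.pi)⁻¹)⁻¹| = 1 := by
        rw [inv_inv, _root_.abs_of_pos hπ, inv_mul_cancel₀ hπ.ne']
      rw [h12, one_smul]
    have hcne : (c:ℂ) ≠ 0 := by exact_mod_cast hc.ne'
    have hφg : ∀ s : ℝ, (φ ((2*Real.pi)⁻¹*s) : ℂ) = (c:ℂ)⁻¹ * g s := by
      intro s
      rw [hgdef]
      rw [← mul_assoc, inv_mul_cancel₀ hcne, one_mul]
    calc (ψ ξ : ℂ) * Complex.exp (-Complex.I * t * ξ)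
        = ((2*Real.pi)⁻¹ • ∫ s : ℝ, Complex.exp (((2*Real.pi*((2*Real.pi)⁻¹*s)*ξ : ℝ):ℂ) * Complex.I) * φ ((2*Real.pi)⁻¹*s)) * Complex.exp (-Complex.I * t * ξ) := by
          rw [hinv ξ, hcv]
      _ = (((2*Real.pi)⁻¹ : ℝ):ℂ) * ∫ s : ℝ, (Complex.exp (((2*Real.pi*((2*Real.pi)⁻¹*s)*ξ : ℝ):ℂ) * Complex.I) * φ ((2*Real.pi)⁻¹*s)) * Complex.exp (-Complex.I * t * ξ) := by
          rw [Complex.real_smul, mul_assoc, ← MeasureTheory.integral_mul_const]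
      _ = (((2*Real.pi)⁻¹ : ℝ):ℂ) * ∫ s : ℝ, (c:ℂ)⁻¹ * (g s * Complex.exp (Complex.I * ((s - t : ℝ):ℂ) * ξ)) := by
          congr 1
          apply MeasureTheory.integral_congr_ae
          apply Filter.Eventually.of_forall
          intro s
          have hAB : Complex.exp (((2*Real.pi*((2*Real.pi)⁻¹*s)*ξ : ℝ):ℂ) * Complex.I) * Complex.exp (-Complex.I * t * ξ) = Complex.exp (Complex.I * ((s - t : ℝ):ℂ) * ξ) := by
            rw [← Complex.exp_add]
            congr 1
            have h2 : (2*Real.pi*((2*Real.pi)⁻¹*s)*ξ : ℝ) = s * ξ := by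
              field_simp
            rw [h2]
            push_cast
            ring
          calc Complex.exp (((2*Real.pi*((2*Real.pi)⁻¹*s)*ξ : ℝ):ℂ) * Complex.I) * φ ((2*Real.pi)⁻¹*s) * Complex.exp (-Complex.I * t * ξ)
              = φ ((2*Real.pi)⁻¹*s) * (Complex.exp (((2*Real.pi*((2*Real.pi)⁻¹*s)*ξ : ℝ):ℂ) * Complex.I) * Complex.exp (-Complex.I * t * ξ)) := by ring
            _ = (c:ℂ)⁻¹ * g s * Complex.exp (Complex.I * ((s - t : ℝ):ℂ) * ξ) := by rw [hAB, hφg s]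
            _ = (c:ℂ)⁻¹ * (g s * Complex.exp (Complex.I * ((s - t : ℝ):ℂ) * ξ)) := by ring
      _ = ((((2*Real.pi)⁻¹ : ℝ):ℂ) * (c:ℂ)⁻¹) * ∫ s : ℝ, g s * Complex.exp (Complex.I * ((s - t : ℝ):ℂ) * ξ) := by
          rw [MeasureTheory.integral_const_mul, mul_assoc]
      _ = (c:ℂ) * ∫ s : ℝ, g s * Complex.exp (Complex.I * ((s - t : ℝ):ℂ) * ξ) := by
          congr 1
          have hcc : ((c:ℝ):ℂ) * ((c:ℝ):ℂ) = (((2*Real.pi)⁻¹ : ℝ):ℂ) := by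
            exact_mod_cast congrArg Complex.ofReal hc2
          rw [← hcc, mul_assoc, mul_inv_cancel₀ hcne, mul_one]
  have hcne : (c:ℂ) ≠ 0 := by exact_mod_cast hc.ne'
  have hgint : Integrable g := by
    apply Integrable.const_mul
    exact φ.integrable.comp_mul_left' (by positivity : ((2*Real.pi)⁻¹:ℝ) ≠ 0)
  have hgcont : Continuous g :=
    continuous_const.mul (φ.continuous.comp (continuous_const.mul continuous_id))
  have hmain : ∀ ε : ℝ, ε ∈ Set.Ioi (0:ℝ) →
      ‖(((2 * Real.pi) ^ (-(1 : ℝ) / 2) : ℝ) : ℂ) *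
          ∫ ξ in {ξ : ℝ | ε ≤ |ξ|}, ψ ξ * Complex.exp (-Complex.I * t * ξ) / ξ‖
        ≤ Real.pi * ∫ s : ℝ, ‖g s‖ := by
    intro ε hε
    rw [Set.mem_Ioi] at hε
    set S := {ξ : ℝ | ε ≤ |ξ|} with hS
    set A : ℕ → Set ℝ := fun n => S ∩ Set.Icc (-(n:ℝ)) (n:ℝ) with hA
    have hSm : MeasurableSet S := measurableSet_le measurable_const measurable_abs
    have hAm : ∀ n, MeasurableSet (A n) := fun n => hSm.inter measurableSet_Icc
    have hAmono : Monotone A := by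
      intro m n hmn
      apply Set.inter_subset_inter_right
      apply Set.Icc_subset_Icc
      · exact neg_le_neg (by exact_mod_cast hmn)
      · exact_mod_cast hmn
    have hAun : ⋃ n, A n = S := by
      ext ξ
      simp only [hA, Set.mem_iUnion, Set.mem_inter_iff, Set.mem_Icc]
      constructor
      · rintro ⟨n, hn, -⟩; exact hn
      · intro hξ
        obtain ⟨n, hn⟩ := exists_nat_ge |ξ|
        exact ⟨n, hξ, (_root_.abs_le.mp hn).1, (_root_.abs_le.mp hn).2⟩
    set Φ : ℝ → ℂ := fun ξ => ψ ξ * Complex.exp (-Complex.I * t * ξ) / ξ with hΦ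
    have hexp1 : ∀ ξ : ℝ, ‖Complex.exp (-Complex.I * t * ξ)‖ = 1 := by
      intro ξ
      rw [Complex.norm_exp]
      simp
    have hΦmeas : AEStronglyMeasurable Φ volume := by
      apply Measurable.aestronglyMeasurable
      apply Measurable.div
      · apply Continuous.measurable
        exact ψ.continuous.mul (Complex.continuous_exp.comp
          ((continuous_const.mul continuous_const).mul Complex.continuous_ofReal))
      · exact Complex.measurable_ofReal
    have hΦint : IntegrableOn Φ S := by
      apply Integrable.mono' ((ψ.integrable.norm.const_mul ε⁻¹).restrict) hΦmeas.restrict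
      filter_upwards [MeasureTheory.ae_restrict_mem hSm] with ξ hξ
      have hξε : ε ≤ |ξ| := hξ
      have hξ0 : (0:ℝ) < |ξ| := lt_of_lt_of_le hε hξε
      rw [hΦ]
      simp only [norm_div, norm_mul, hexp1 ξ, mul_one, Complex.norm_real, Real.norm_eq_abs]
      rw [div_le_iff₀ hξ0]
      calc ‖ψ ξ‖ = ε⁻¹ * ‖ψ ξ‖ * ε := by field_simp
        _ ≤ ε⁻¹ * ‖ψ ξ‖ * |ξ| := by
            apply mul_le_mul_of_nonneg_left hξε
            positivity
    have htend : Tendsto (fun n : ℕ => ∫ ξ in A n, Φ ξ) atTop (nhds (∫ ξ in S, Φ ξ)) := by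
      have h := MeasureTheory.tendsto_setIntegral_of_monotone hAm hAmono (by rw [hAun]; exact hΦint)
      rwa [hAun] at h
    have hbn : ∀ n : ℕ, ‖∫ ξ in A n, Φ ξ‖ ≤ (c * 6) * ∫ s : ℝ, ‖g s‖ := by
      intro n
      have hAfin : volume (A n) < ⊤ :=
        lt_of_le_of_lt (measure_mono Set.inter_subset_right) measure_Icc_lt_top
      have hcongr : ∫ ξ in A n, Φ ξ
          = ∫ ξ in A n, ∫ s : ℝ, (c:ℂ) * (g s * Complex.exp (Complex.I * ((s - t : ℝ):ℂ) * ξ) / ξ) := by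
        apply MeasureTheory.setIntegral_congr_fun (hAm n)
        intro ξ hξ
        have hξε : ε ≤ |ξ| := hξ.1
        show Φ ξ = _
        rw [hΦ]
        simp only []
        rw [hkey ξ, mul_div_assoc, ← MeasureTheory.integral_div, ← MeasureTheory.integral_const_mul]
      have hHmeas : AEStronglyMeasurable
          (fun p : ℝ × ℝ => (c:ℂ) * (g p.2 * Complex.exp (Complex.I * ((p.2 - t : ℝ):ℂ) * p.1) / p.1))
          ((volume.restrict (A n)).prod volume) := by
        apply Measurable.aestronglyMeasurable
        apply Measurable.const_mul
        apply Measurable.div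
        · apply Continuous.measurable
          apply Continuous.mul (hgcont.comp continuous_snd)
          apply Complex.continuous_exp.comp
          apply Continuous.mul
          · exact continuous_const.mul (Complex.continuous_ofReal.comp (continuous_snd.sub continuous_const))
          · exact Complex.continuous_ofReal.comp continuous_fst
        · exact Complex.measurable_ofReal.comp measurable_fst
      have hHint : Integrable
          (Function.uncurry fun (ξ s : ℝ) => (c:ℂ) * (g s * Complex.exp (Complex.I * ((s - t : ℝ):ℂ) * ξ) / ξ))
          ((volume.restrict (A n)).prod volume) := by
        have hHmeas' : AEStronglyMeasurable
            (Function.uncurry fun (ξ s : ℝ) => (c:ℂ) * (g s * Complex.exp (Complex.I * ((s - t : ℝ):ℂ) * ξ) / ξ))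
            ((volume.restrict (A n)).prod volume) := hHmeas
        apply Integrable.mono' (g := fun p : ℝ × ℝ => (c * ε⁻¹) * ‖g p.2‖) ?_ hHmeas'
        swap
        · apply Integrable.mul_prod (L := ℝ) (f := fun _ : ℝ => c * ε⁻¹) (g := fun s => ‖g s‖)
          · exact MeasureTheory.integrableOn_const hAfin.ne enorm_ne_top
          · exact hgint.norm
        · have hprod : (volume.restrict (A n)).prod (volume : Measure ℝ)
              = ((volume : Measure ℝ).prod volume).restrict (A n ×ˢ Set.univ) := by
            rw [← MeasureTheory.Measure.restrict_univ (μ := (volume : Measure ℝ)),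
              MeasureTheory.Measure.prod_restrict, MeasureTheory.Measure.restrict_univ]
          rw [hprod]
          filter_upwards [MeasureTheory.ae_restrict_mem ((hAm n).prod MeasurableSet.univ)] with p hp
          have hεp : ε ≤ |p.1| := hp.1.1
          have hp0 : (0:ℝ) < |p.1| := lt_of_lt_of_le hε hεp
          have hexp2 : ‖Complex.exp (Complex.I * ((p.2 - t : ℝ):ℂ) * p.1)‖ = 1 := by
            rw [Complex.norm_exp]
            simp
          have h1 : ‖(c:ℂ) * (g p.2 * Complex.exp (Complex.I * ((p.2 - t : ℝ):ℂ) * p.1) / p.1)‖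
              = c * (‖g p.2‖ / |p.1|) := by
            rw [norm_mul, norm_div, norm_mul, hexp2, mul_one, Complex.norm_real,
              Complex.norm_real, Real.norm_eq_abs, Real.norm_eq_abs, _root_.abs_of_pos hc]
          show ‖(c:ℂ) * (g p.2 * Complex.exp (Complex.I * ((p.2 - t : ℝ):ℂ) * p.1) / p.1)‖
              ≤ (c * ε⁻¹) * ‖g p.2‖
          rw [h1]
          calc c * (‖g p.2‖ / |p.1|) ≤ c * (‖g p.2‖ / ε) := by gcongr
            _ = (c * ε⁻¹) * ‖g p.2‖ := by rw [div_eq_mul_inv]; ring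
      have hswap := MeasureTheory.integral_integral_swap
        (f := fun (ξ s : ℝ) => (c:ℂ) * (g s * Complex.exp (Complex.I * ((s - t : ℝ):ℂ) * (ξ:ℂ)) / (ξ:ℂ))) hHint
      rw [hcongr, hswap]
      have hinner : ∀ s : ℝ, (∫ ξ in A n, (c:ℂ) * (g s * Complex.exp (Complex.I * ((s - t : ℝ):ℂ) * ξ) / ξ))
          = (c:ℂ) * (g s * ∫ ξ in A n, Complex.exp (Complex.I * ((s - t : ℝ):ℂ) * ξ) / ξ) := by
        intro s
        rw [MeasureTheory.integral_const_mul]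
        congr 1
        rw [← MeasureTheory.integral_const_mul]
        apply MeasureTheory.integral_congr_ae
        apply Filter.Eventually.of_forall
        intro ξ
        ring
      calc ‖∫ s : ℝ, ∫ ξ in A n, (c:ℂ) * (g s * Complex.exp (Complex.I * ((s - t : ℝ):ℂ) * ξ) / ξ)‖
          ≤ ∫ s : ℝ, (c * 6) * ‖g s‖ := by
            apply MeasureTheory.norm_integral_le_of_norm_le (hgint.norm.const_mul (c*6))
            apply Filter.Eventually.of_forall
            intro s
            rw [hinner s, norm_mul, norm_mul, Complex.norm_real, Real.norm_eq_abs, _root_.abs_of_pos hc]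
            have hK := kernel_bound (ε := ε) (R := (n:ℝ)) (a := s - t) hε
            have hgn : (0:ℝ) ≤ ‖g s‖ := norm_nonneg _
            have hKn : (0:ℝ) ≤ ‖∫ ξ in A n, Complex.exp (Complex.I * ((s - t : ℝ):ℂ) * ξ) / ξ‖ := norm_nonneg _
            calc c * (‖g s‖ * ‖∫ ξ in A n, Complex.exp (Complex.I * ((s - t : ℝ):ℂ) * ξ) / ξ‖)
                ≤ c * (‖g s‖ * 6) := by
                  apply mul_le_mul_of_nonneg_left _ hc.le
                  exact mul_le_mul_of_nonneg_left hK hgn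
              _ = (c * 6) * ‖g s‖ := by ring
        _ = (c * 6) * ∫ s : ℝ, ‖g s‖ := MeasureTheory.integral_const_mul _ _
    have hlim : ‖∫ ξ in S, Φ ξ‖ ≤ (c * 6) * ∫ s : ℝ, ‖g s‖ :=
      le_of_tendsto htend.norm (Filter.Eventually.of_forall hbn)
    calc ‖(((2 * Real.pi) ^ (-(1 : ℝ) / 2) : ℝ) : ℂ) * ∫ ξ in S, Φ ξ‖
        = c * ‖∫ ξ in S, Φ ξ‖ := by
          rw [norm_mul, Complex.norm_real, Real.norm_eq_abs, _root_.abs_of_pos hc]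
      _ ≤ c * ((c * 6) * ∫ s : ℝ, ‖g s‖) := mul_le_mul_of_nonneg_left hlim hc.le
      _ ≤ Real.pi * ∫ s : ℝ, ‖g s‖ := by
          have hI : (0:ℝ) ≤ ∫ s : ℝ, ‖g s‖ := MeasureTheory.integral_nonneg fun s => norm_nonneg _
          have hcpi : c * (c * 6) ≤ Real.pi := by
            have h3 : (3:ℝ) < Real.pi := Real.pi_gt_three
            have heq : c * (c * 6) = 6 * (2 * Real.pi)⁻¹ := by rw [← hc2]; ring
            rw [heq, show (6:ℝ) * (2*Real.pi)⁻¹ = 3/Real.pi by field_simp; ring,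
              div_le_iff₀ Real.pi_pos]
            nlinarith
          calc c * ((c * 6) * ∫ s : ℝ, ‖g s‖) = (c * (c * 6)) * ∫ s : ℝ, ‖g s‖ := by ring
            _ ≤ Real.pi * ∫ s : ℝ, ‖g s‖ := mul_le_mul_of_nonneg_right hcpi hI
  have hnormF : ‖F‖ ≤ Real.pi * ∫ s : ℝ, ‖g s‖ := by
    apply le_of_tendsto hF.norm
    filter_upwards [self_mem_nhdsWithin] with ε hε
    exact hmain ε hε
  have hrhs : (fun s : ℝ => ‖(((2 * Real.pi) ^ (-(1 : ℝ) / 2) : ℝ) : ℂ) *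
      ∫ ξ : ℝ, ψ ξ * Complex.exp (-Complex.I * s * ξ)‖) = fun s => ‖g s‖ := by
    funext s
    rw [hgs s]
  rw [hrhs]
  exact hnormF
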